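/- Let H be a real Hilbert space and A : H → H a bounded, self-adjoint, positive semidefinite operator. For u ∈ H with Au ≠ 0, set û = Au / ‖Au‖. Then −⟨Au, u⟩ ≥ −⟨Aû, û⟩ whenever ‖u‖ ≤ 1. Equivalently, one normalized application of A does not increase the energy −⟨A·,·⟩ on the unit ball. -/

import Mathlib

open RealInnerProductSpace

theorem stmt5 {H : Type*} [NormedAddCommGroup H] [InnerProductSpace ℝ H]
    (A : H →L[ℝ] H) (hsa : ∀ x y : H, ⟪A x, y⟫ = ⟪x, A y⟫)
    (hpsd : ∀ x : H, 0 ≤ ⟪A x, x⟫)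
    (u : H) (hu : ‖u‖ ≤ 1) (hAu : A u ≠ 0) :
    -⟪A u, u⟫ ≥ -⟪A (‖A u‖⁻¹ • A u), ‖A u‖⁻¹ • A u⟫ := by
  set v : H := ‖A u‖⁻¹ • A u with hv
  have hn : (0:ℝ) < ‖A u‖ := norm_pos_iff.mpr hAu
  have hAuv : ⟪A u, v⟫ = ‖A u‖ := by
    rw [hv, real_inner_smul_right, real_inner_self_eq_norm_sq]
    field_simp
  have h1 : (0:ℝ) ≤ ⟪A (v - u), v - u⟫ := hpsd _
  have h2 : ⟪A (v - u), v - u⟫ = ⟪A v, v⟫ - 2 * ⟪A u, v⟫ + ⟪A u, u⟫ := by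
    rw [map_sub, inner_sub_left, inner_sub_right, inner_sub_right]
    linarith [hsa v u, real_inner_comm v (A u)]
  have h3 : ⟪A u, u⟫ ≤ ‖A u‖ := by
    calc ⟪A u, u⟫ ≤ ‖A u‖ * ‖u‖ := real_inner_le_norm _ _
    _ ≤ ‖A u‖ * 1 := by nlinarith
    _ = ‖A u‖ := mul_one _
  rw [h2, hAuv] at h1
  linarith
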